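/- Let G be a finite simple graph and p > 0 a real number. Among all partitions of the vertex set of G into cliques that maximize ∑_i |C_i|^{p+1} over the parts C_i, there exists one in which some part is a maximal clique of G (i.e., a clique not properly contained in any other clique of G). -/

import Mathlib

open Finset

variable {V : Type*} [Fintype V] [DecidableEq V]

/-- A partition of the vertex set of `G` into (nonempty) cliques. -/
def IsCliquePartition (G : SimpleGraph V) (P : Finset (Finset V)) : Prop :=
  (∀ C ∈ P, G.IsClique (C : Set V)) ∧
  (∀ C ∈ P, C.Nonempty) ∧
  (∀ v : V, ∃! C, C ∈ P ∧ v ∈ C)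

private lemma sm_aux {q : ℝ} (hq : 1 < q) :
    StrictMonoOn (fun x : ℝ => (x + 1) ^ q - x ^ q) (Set.Ici 0) := by
  have hcont : Continuous (fun x : ℝ => (x + 1) ^ q - x ^ q) := by
    apply Continuous.sub
    · exact (continuous_id.add continuous_const).rpow_const (fun x => Or.inr (by linarith))
    · exact continuous_id.rpow_const (fun x => Or.inr (by linarith))
  apply strictMonoOn_of_deriv_pos (convex_Ici 0) hcont.continuousOn
  intro x hx
  rw [interior_Ici] at hx
  have h1 : HasDerivAt (fun x : ℝ => (x + 1) ^ q) (1 * q * (x + 1) ^ (q - 1)) x :=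
    ((hasDerivAt_id x).add_const 1).rpow_const (Or.inr hq.le)
  have h2 : HasDerivAt (fun x : ℝ => x ^ q) (1 * q * x ^ (q - 1)) x :=
    (hasDerivAt_id x).rpow_const (Or.inr hq.le)
  rw [show deriv (fun x : ℝ => (x + 1) ^ q - x ^ q) x = _ from (h1.sub h2).deriv]
  have hlt : x ^ (q - 1) < (x + 1) ^ (q - 1) :=
    Real.rpow_lt_rpow hx.le (lt_add_one x) (by linarith)
  have hq0 : 0 < q := by linarith
  nlinarith

private lemma key_ineq {q : ℝ} (hq : 1 < q) {b c : ℝ} (hb : 1 ≤ b) (hbc : b ≤ c) :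
    c ^ q + b ^ q < (c + 1) ^ q + (b - 1) ^ q := by
  have h := sm_aux hq (Set.mem_Ici.mpr (by linarith : (0:ℝ) ≤ b - 1))
    (Set.mem_Ici.mpr (by linarith : (0:ℝ) ≤ c)) (by linarith : b - 1 < c)
  simp only at h
  have e : b - 1 + 1 = b := by ring
  rw [e] at h
  linarith

/-- for `p > 0`, among the partitions of the vertex set of a (nonempty) finite
simple graph into cliques maximizing `∑_i |C_i|^{p+1}`, there is one having a part that is a
maximal clique of `G`. -/
theorem exists_optimal_cliquePartition_with_maximalClique
    [Nonempty V] (G : SimpleGraph V) (p : ℝ) (hp : 0 < p) :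
    ∃ P : Finset (Finset V), IsCliquePartition G P ∧
      (∀ Q : Finset (Finset V), IsCliquePartition G Q →
        ∑ C ∈ Q, (C.card : ℝ) ^ (p + 1) ≤ ∑ C ∈ P, (C.card : ℝ) ^ (p + 1)) ∧
      ∃ C ∈ P, G.IsClique (C : Set V) ∧
        ∀ D : Finset V, G.IsClique (D : Set V) → C ⊆ D → C = D := by
  classical
  set f : Finset (Finset V) → ℝ := fun P => ∑ C ∈ P, (C.card : ℝ) ^ (p + 1) with hf
  have hq1 : 1 < p + 1 := by linarith
  -- the trivial partition into singletons
  have hP0 : IsCliquePartition G (Finset.univ.image fun v => ({v} : Finset V)) := by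
    refine ⟨?_, ?_, ?_⟩
    · intro C hC
      simp only [mem_image] at hC
      obtain ⟨v, _, rfl⟩ := hC
      simp [SimpleGraph.isClique_iff, Set.Pairwise]
    · intro C hC
      simp only [mem_image] at hC
      obtain ⟨v, _, rfl⟩ := hC
      exact ⟨v, mem_singleton_self v⟩
    · intro v
      refine ⟨{v}, ⟨mem_image_of_mem _ (mem_univ v), mem_singleton_self v⟩, ?_⟩
      rintro C ⟨hC, hv⟩
      simp only [mem_image] at hC
      obtain ⟨w, _, rfl⟩ := hC
      simp_all
  set S := Finset.univ.filter (fun P : Finset (Finset V) => IsCliquePartition G P) with hSdef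
  have hS : S.Nonempty :=
    ⟨Finset.univ.image fun v => ({v} : Finset V), by simp [hSdef, hP0]⟩
  obtain ⟨P, hPS, hPmax⟩ := S.exists_max_image f hS
  have hopt : ∀ Q, IsCliquePartition G Q → f Q ≤ f P := fun Q hQ =>
    hPmax Q (by simp [hSdef, hQ])
  obtain ⟨hclique, hne, hcover⟩ := (Finset.mem_filter.mp hPS).2
  obtain ⟨v0⟩ := ‹Nonempty V›
  obtain ⟨B0, ⟨hB0, _⟩, _⟩ := hcover v0
  obtain ⟨C, hCP, hCmax⟩ := P.exists_max_image Finset.card ⟨B0, hB0⟩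
  refine ⟨P, ⟨hclique, hne, hcover⟩, hopt, C, hCP, hclique C hCP, ?_⟩
  intro D hD hCD
  by_contra hne'
  obtain ⟨v, hvD, hvC⟩ := exists_of_ssubset (ssubset_of_subset_of_ne hCD hne')
  have hvadj : ∀ u ∈ C, G.Adj v u := fun u hu =>
    hD (mem_coe.mpr hvD) (mem_coe.mpr (hCD hu)) (fun h => hvC (by rw [h]; exact hu))
  obtain ⟨B, ⟨hBP, hvB⟩, _⟩ := hcover v
  have hBC : B ≠ C := fun h => hvC (h ▸ hvB)
  have huniq : ∀ {A₁ A₂ : Finset V} {w : V}, A₁ ∈ P → A₂ ∈ P → w ∈ A₁ → w ∈ A₂ → A₁ = A₂ := by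
    intro A₁ A₂ w h1 h2 hw1 hw2
    obtain ⟨A, _, hA⟩ := hcover w
    rw [hA A₁ ⟨h1, hw1⟩, hA A₂ ⟨h2, hw2⟩]
  set C' := insert v C with hC'def
  set B' := B.erase v with hB'def
  set R := (P.erase C).erase B with hRdef
  have hRmem : ∀ {A : Finset V}, A ∈ R ↔ A ∈ P ∧ A ≠ C ∧ A ≠ B := by
    intro A
    simp only [hRdef, mem_erase]
    tauto
  obtain ⟨u0, hu0⟩ := hne C hCP
  have hC'notP : C' ∉ P := by
    intro h
    have h1 : C' = B := huniq h hBP (mem_insert_self v C) hvB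
    have h2 : u0 ∈ B := by rw [← h1]; exact mem_insert_of_mem hu0
    exact hBC (huniq hBP hCP h2 hu0)
  have hBle : B.card ≤ C.card := hCmax B hBP
  have hB1 : 1 ≤ B.card := card_pos.mpr ⟨v, hvB⟩
  have hC'card : C'.card = C.card + 1 := card_insert_of_notMem hvC
  have hB'card : B'.card = B.card - 1 := card_erase_of_mem hvB
  have hC'clique : G.IsClique (C' : Set V) := by
    rw [hC'def, coe_insert]
    exact (hclique C hCP).insert (fun u hu _ => hvadj u hu)
  have hBPC : B ∈ P.erase C := mem_erase.mpr ⟨hBC, hBP⟩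
  have hPsum : f P = (C.card : ℝ) ^ (p + 1) + (B.card : ℝ) ^ (p + 1)
      + ∑ A ∈ R, (A.card : ℝ) ^ (p + 1) := by
    show (∑ A ∈ P, ((A.card : ℝ)) ^ (p + 1)) = _
    rw [← Finset.add_sum_erase _ _ hCP, ← Finset.add_sum_erase _ _ hBPC, hRdef]
    ring
  have hC'notR : C' ∉ R := fun h => hC'notP (hRmem.mp h).1
  by_cases hB'ne : B'.Nonempty
  · -- move v from B to C
    have hB'notP : B' ∉ P := by
      intro h
      obtain ⟨w, hw⟩ := hB'ne
      have h1 : B' = B := huniq h hBP hw (mem_of_mem_erase hw)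
      have h2 : v ∈ B' := by rw [h1]; exact hvB
      exact notMem_erase v B h2
    set Q := insert C' (insert B' R) with hQdef
    have hC'B' : C' ≠ B' := by
      intro h
      have : v ∈ B' := by rw [← h]; exact mem_insert_self v C
      exact notMem_erase v B this
    have hB'notR : B' ∉ R := fun h => hB'notP (hRmem.mp h).1
    have hQpart : IsCliquePartition G Q := by
      refine ⟨?_, ?_, ?_⟩
      · intro A hA
        rcases mem_insert.mp hA with rfl | hA
        · exact hC'clique
        rcases mem_insert.mp hA with rfl | hA
        · exact (hclique B hBP).subset (coe_subset.mpr (erase_subset v B))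
        · exact hclique A (hRmem.mp hA).1
      · intro A hA
        rcases mem_insert.mp hA with rfl | hA
        · exact ⟨v, mem_insert_self v C⟩
        rcases mem_insert.mp hA with rfl | hA
        · exact hB'ne
        · exact hne A (hRmem.mp hA).1
      · intro w
        by_cases hwC' : w ∈ C'
        · refine ⟨C', ⟨mem_insert_self _ _, hwC'⟩, ?_⟩
          rintro A ⟨hA, hwA⟩
          rcases mem_insert.mp hA with rfl | hA
          · rfl
          rcases mem_insert.mp hA with rfl | hA
          · exfalso
            rcases mem_insert.mp hwC' with rfl | hwc
            · exact notMem_erase w B hwA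
            · exact hBC (huniq hBP hCP (mem_of_mem_erase hwA) hwc)
          · exfalso
            obtain ⟨hAP, hAC, hAB⟩ := hRmem.mp hA
            rcases mem_insert.mp hwC' with rfl | hwc
            · exact hAB (huniq hAP hBP hwA hvB)
            · exact hAC (huniq hAP hCP hwA hwc)
        · obtain ⟨A, ⟨hAP, hwA⟩, _⟩ := hcover w
          have hAC : A ≠ C := fun h => hwC' (mem_insert_of_mem (h ▸ hwA))
          have hwv : w ≠ v := fun h => hwC' (h ▸ mem_insert_self v C)
          by_cases hAB : A = B
          · subst hAB
            refine ⟨B', ⟨mem_insert_of_mem (mem_insert_self _ _), mem_erase.mpr ⟨hwv, hwA⟩⟩, ?_⟩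
            rintro A' ⟨hA', hwA'⟩
            rcases mem_insert.mp hA' with rfl | hA'
            · exact absurd hwA' hwC'
            rcases mem_insert.mp hA' with rfl | hA'
            · rfl
            · exfalso
              exact (hRmem.mp hA').2.2 (huniq (hRmem.mp hA').1 hBP hwA' hwA)
          · refine ⟨A, ⟨mem_insert_of_mem (mem_insert_of_mem (hRmem.mpr ⟨hAP, hAC, hAB⟩)), hwA⟩, ?_⟩
            rintro A' ⟨hA', hwA'⟩
            rcases mem_insert.mp hA' with rfl | hA'
            · exact absurd hwA' hwC'
            rcases mem_insert.mp hA' with rfl | hA'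
            · exact absurd (huniq hBP hAP (mem_of_mem_erase hwA') hwA).symm hAB
            · exact huniq (hRmem.mp hA').1 hAP hwA' hwA
    have hQsum : f Q = (C'.card : ℝ) ^ (p + 1) + (B'.card : ℝ) ^ (p + 1)
        + ∑ A ∈ R, (A.card : ℝ) ^ (p + 1) := by
      show (∑ A ∈ Q, ((A.card : ℝ)) ^ (p + 1)) = _
      rw [hQdef, Finset.sum_insert (by simp [mem_insert, hC'B', hC'notR]),
        Finset.sum_insert hB'notR]
      ring
    have hkey : (C.card : ℝ) ^ (p + 1) + (B.card : ℝ) ^ (p + 1)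
        < (C'.card : ℝ) ^ (p + 1) + (B'.card : ℝ) ^ (p + 1) := by
      have h := key_ineq hq1 (b := (B.card : ℝ)) (c := (C.card : ℝ))
        (by exact_mod_cast hB1) (by exact_mod_cast hBle)
      have e1 : (C'.card : ℝ) = (C.card : ℝ) + 1 := by rw [hC'card]; push_cast; ring
      have e2 : (B'.card : ℝ) = (B.card : ℝ) - 1 := by
        rw [hB'card]; rw [Nat.cast_sub hB1]; norm_num
      rw [e1, e2]; linarith
    have := hopt Q hQpart
    rw [hQsum, hPsum] at this
    linarith
  · -- B = {v}; delete B entirely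
    have hBcard : B.card = 1 := by
      rw [not_nonempty_iff_eq_empty] at hB'ne
      have := card_erase_of_mem hvB
      rw [hB'def] at hB'ne
      rw [hB'ne] at this
      simp at this
      omega
    set Q := insert C' R with hQdef
    have hQpart : IsCliquePartition G Q := by
      have hBv : B = {v} := by
        apply Finset.eq_singleton_iff_unique_mem.mpr
        refine ⟨hvB, fun w hw => ?_⟩
        by_contra hne2
        exact hne2 (by
          have := card_eq_one.mp hBcard
          obtain ⟨a, ha⟩ := this
          rw [ha] at hw hvB
          rw [mem_singleton.mp hw, mem_singleton.mp hvB])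
      refine ⟨?_, ?_, ?_⟩
      · intro A hA
        rcases mem_insert.mp hA with rfl | hA
        · exact hC'clique
        · exact hclique A (hRmem.mp hA).1
      · intro A hA
        rcases mem_insert.mp hA with rfl | hA
        · exact ⟨v, mem_insert_self v C⟩
        · exact hne A (hRmem.mp hA).1
      · intro w
        by_cases hwC' : w ∈ C'
        · refine ⟨C', ⟨mem_insert_self _ _, hwC'⟩, ?_⟩
          rintro A ⟨hA, hwA⟩
          rcases mem_insert.mp hA with rfl | hA
          · rfl
          · exfalso
            obtain ⟨hAP, hAC, hAB⟩ := hRmem.mp hA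
            rcases mem_insert.mp hwC' with rfl | hwc
            · exact hAB (huniq hAP hBP hwA hvB)
            · exact hAC (huniq hAP hCP hwA hwc)
        · obtain ⟨A, ⟨hAP, hwA⟩, _⟩ := hcover w
          have hAC : A ≠ C := fun h => hwC' (mem_insert_of_mem (h ▸ hwA))
          have hwv : w ≠ v := fun h => hwC' (h ▸ mem_insert_self v C)
          have hAB : A ≠ B := by
            intro h
            rw [h, hBv] at hwA
            exact hwv (mem_singleton.mp hwA)
          refine ⟨A, ⟨mem_insert_of_mem (hRmem.mpr ⟨hAP, hAC, hAB⟩), hwA⟩, ?_⟩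
          rintro A' ⟨hA', hwA'⟩
          rcases mem_insert.mp hA' with rfl | hA'
          · exact absurd hwA' hwC'
          · exact huniq (hRmem.mp hA').1 hAP hwA' hwA
    have hQsum : f Q = (C'.card : ℝ) ^ (p + 1) + ∑ A ∈ R, (A.card : ℝ) ^ (p + 1) := by
      show (∑ A ∈ Q, ((A.card : ℝ)) ^ (p + 1)) = _
      rw [hQdef, Finset.sum_insert hC'notR]
    have hkey : (C.card : ℝ) ^ (p + 1) + (B.card : ℝ) ^ (p + 1)
        < (C'.card : ℝ) ^ (p + 1) := by
      have h := key_ineq hq1 (b := (1 : ℝ)) (c := (C.card : ℝ)) le_rfl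
        (by exact_mod_cast hBcard ▸ hBle)
      have e1 : (C'.card : ℝ) = (C.card : ℝ) + 1 := by rw [hC'card]; push_cast; ring
      rw [hBcard, e1]
      have h0 : ((1:ℝ) - 1) ^ (p + 1) = 0 := by
        norm_num
        exact Real.zero_rpow (by linarith)
      have h1 : (1:ℝ) ^ (p + 1) = 1 := Real.one_rpow _
      push_cast
      rw [h1] at h ⊢
      rw [h0] at h
      linarith
    have := hopt Q hQpart
    rw [hQsum, hPsum] at this
    linarith
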